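/- For every integer t ≥ 1, the graph K̄_t △ K̄_t has a pivot-minor isomorphic to P_{2t}. -/

import Mathlib

open SimpleGraph

universe u v

/-! ### Basic graph operations: flips, local complementation, pivoting, pivot-minors -/

/-- Flip the adjacency of `G` exactly at the pairs of distinct vertices where the
(symmetrized) predicate `p` holds. -/
def sdFlip {V : Type u} (G : SimpleGraph V) (p : V → V → Prop) : SimpleGraph V where
  Adj x y := x ≠ y ∧ Xor' (G.Adj x y) (p x y ∨ p y x)
  symm := by
    constructor
    intro x y h
    refine ⟨h.1.symm, ?_⟩
    have h2 := h.2
    rwa [G.adj_comm x y, or_comm] at h2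
  loopless := by
    constructor
    intro x h
    exact h.1 rfl

/-- Local complementation `G * v`: complement the adjacency inside the neighborhood of `v`. -/
def localComp {V : Type u} (G : SimpleGraph V) (v : V) : SimpleGraph V :=
  sdFlip G (fun x y => G.Adj v x ∧ G.Adj v y)

/-- Pivoting an edge `uv`: `G ∧ uv = G * u * v * u`. -/
def pivot {V : Type u} (G : SimpleGraph V) (u v : V) : SimpleGraph V :=
  localComp (localComp (localComp G u) v) u

/-- Applying a sequence of pivots. -/
def pivotSeq {V : Type u} (G : SimpleGraph V) : List (V × V) → SimpleGraph V
  | [] => G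
  | e :: l => pivotSeq (pivot G e.1 e.2) l

/-- Each pivot in the sequence is performed on an edge of the current graph. -/
def ValidPivots {V : Type u} (G : SimpleGraph V) : List (V × V) → Prop
  | [] => True
  | e :: l => G.Adj e.1 e.2 ∧ ValidPivots (pivot G e.1 e.2) l

/-- `H` is a pivot-minor of `G`: `H` is isomorphic to a graph obtained from `G` by a sequence of
pivotings (on edges of the current graph) and vertex deletions. -/
def IsPivotMinorOf {W : Type v} {V : Type u} (H : SimpleGraph W) (G : SimpleGraph V) : Prop :=
  ∃ (l : List (V × V)) (S : Set V), ValidPivots G l ∧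
    Nonempty (H ≃g (pivotSeq G l).induce S)

/-! ### The half-graph join `G △ H` -/

/-- `G △ H`: the disjoint union of `G` and `H` together with the half graph joining them:
the `i`-th vertex of `G` is adjacent to the `j`-th vertex of `H` iff `i ≥ j`. -/
def halfJoin {n : ℕ} (G H : SimpleGraph (Fin n)) : SimpleGraph (Fin n ⊕ Fin n) where
  Adj x y :=
    match x, y with
    | Sum.inl i, Sum.inl i' => G.Adj i i'
    | Sum.inr j, Sum.inr j' => H.Adj j j'
    | Sum.inl i, Sum.inr j => j ≤ i
    | Sum.inr j, Sum.inl i => j ≤ i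
  symm := by
    constructor
    rintro (i | i) (j | j) h
    · exact G.adj_symm h
    · exact h
    · exact h
    · exact H.adj_symm h
  loopless := by
    constructor
    rintro (i | i) h
    · exact G.loopless.irrefl i h
    · exact H.loopless.irrefl i h

/-! ### Flips by a set, by a pair of sets, and by a collection of sets -/

/-- The `X`-flip of `G`: complement the adjacency inside `X`. (The `∅`-flip is `G` itself.) -/
def setFlip {V : Type u} (G : SimpleGraph V) (X : Set V) : SimpleGraph V :=
  sdFlip G (fun x y => x ∈ X ∧ y ∈ X)

/-- `G * (X, Y)`: complement the adjacency between `X` and `Y`. -/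
def pairFlip {V : Type u} (G : SimpleGraph V) (X Y : Set V) : SimpleGraph V :=
  sdFlip G (fun x y => x ∈ X ∧ y ∈ Y)

open Classical in
/-- The member of the collection `P` containing `v`, if any, and `{v}` otherwise. -/
noncomputable def blockOf {V : Type u} (P : Set (Set V)) (v : V) : Set V :=
  if h : ∃ X ∈ P, v ∈ X then h.choose else {v}

/-- A subset `F ⊆ P²` is symmetric if `(X,X') ∈ F` implies `(X',X) ∈ F`. -/
def SymmRelSet {α : Type u} (F : Set (α × α)) : Prop :=
  ∀ a b : α, (a, b) ∈ F → (b, a) ∈ F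

/-- The `(P,F)`-flip `H ⊕ (P,F)` of `H`: distinct vertices `u,v` are adjacent iff
`H.Adj u v` XOR `(P(u), P(v)) ∈ F`. -/
noncomputable def collFlip {V : Type u} (H : SimpleGraph V) (P : Set (Set V))
    (F : Set (Set V × Set V)) : SimpleGraph V :=
  sdFlip H (fun x y => (blockOf P x, blockOf P y) ∈ F)

/-- `P` is a collection of pairwise disjoint non-empty subsets. -/
def IsDisjNonemptyColl {V : Type u} (P : Set (Set V)) : Prop :=
  (∀ X ∈ P, X.Nonempty) ∧ P.PairwiseDisjoint id

/-- `Q` is a coarsening of `P`: a collection of disjoint non-empty sets,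
each a union of members of `P`. -/
def IsCoarsening {α : Type u} (Q P : Set (Set α)) : Prop :=
  IsDisjNonemptyColl Q ∧ ∀ X ∈ Q, ∃ C ⊆ P, X = ⋃₀ C

/-! ### The graph `mPₙ` and flipped `mPₙ`'s -/

/-- `mPₙ`: the disjoint union of `m` copies of the path `Pₙ`, with vertex set `[m] × [n]`. -/
def pathsGraph (m n : ℕ) : SimpleGraph (Fin m × Fin n) where
  Adj x y := x.1 = y.1 ∧ (pathGraph n).Adj x.2 y.2
  symm := by
    constructor
    rintro ⟨i, a⟩ ⟨j, b⟩ ⟨h1, h2⟩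
    exact ⟨h1.symm, (pathGraph n).adj_symm h2⟩
  loopless := by
    constructor
    rintro ⟨i, a⟩ ⟨_, h⟩
    exact (pathGraph n).loopless.irrefl a h

/-- The `j`-th column of `mPₙ`. -/
def column (m n : ℕ) (j : Fin n) : Set (Fin m × Fin n) := {p | p.2 = j}

/-- The column set of `mPₙ`. -/
def columnSet (m n : ℕ) : Set (Set (Fin m × Fin n)) := Set.range (column m n)

/-- A flipped `mPₙ`: a `P`-flip of `mPₙ` where `P` is a coarsening of the column set. -/
def IsFlippedPaths (m n : ℕ) (G : SimpleGraph (Fin m × Fin n)) : Prop :=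
  ∃ (P : Set (Set (Fin m × Fin n))) (F : Set (Set (Fin m × Fin n) × Set (Fin m × Fin n))),
    IsCoarsening P (columnSet m n) ∧ F ⊆ P ×ˢ P ∧ SymmRelSet F ∧
    G = collFlip (pathsGraph m n) P F

/-- A `k`-flipped `mPₙ`: a flipped `mPₙ` with `|P| ≤ k`. -/
def IsKFlippedPaths (k m n : ℕ) (G : SimpleGraph (Fin m × Fin n)) : Prop :=
  ∃ (P : Set (Set (Fin m × Fin n))) (F : Set (Set (Fin m × Fin n) × Set (Fin m × Fin n))),
    IsCoarsening P (columnSet m n) ∧ P.ncard ≤ k ∧ F ⊆ P ×ˢ P ∧ SymmRelSet F ∧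
    G = collFlip (pathsGraph m n) P F

/-! ### Cut-rank and rank-depth -/

open Classical in
/-- The cut-rank `ρ_G(S)`: the rank over GF(2) of the `S × (V ∖ S)` submatrix of the
adjacency matrix of `G`. -/
noncomputable def cutRank {V : Type u} [Fintype V] (G : SimpleGraph V) (S : Set V) : ℕ :=
  Matrix.rank (Matrix.of fun (i : S) (j : (Sᶜ : Set V)) =>
    if G.Adj (i : V) (j : V) then (1 : ZMod 2) else 0)

/-- The rank-depth of `G`: the least `k` such that `G` has a decomposition `(T, σ)` into a
tree `T` with the vertices of `G` identified with the leaves of `T` via `σ`, of width at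
most `k` and radius at most `k`.  The width condition is expressed as: for every non-leaf
node `v` of `T` and every set `S ⊆ V(G)` that is a union of parts of the partition of `V(G)`
induced by the components of `T - v`, we have `ρ_G(S) ≤ k`. -/
noncomputable def rankDepth {V : Type u} [Fintype V] (G : SimpleGraph V) : ℕ :=
  sInf {k : ℕ |
    ∃ (N : ℕ) (T : SimpleGraph (Fin N))
      (σ : V ≃ {x : Fin N // (T.neighborSet x).ncard ≤ 1}),
      T.IsTree ∧
      (∃ c : Fin N, ∀ x : Fin N, T.dist c x ≤ k) ∧
      (∀ x : Fin N, 1 < (T.neighborSet x).ncard →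
        ∀ S : Set V,
          (∀ a b : V, a ∈ S →
            (∃ w : T.Walk ((σ a : {x : Fin N // (T.neighborSet x).ncard ≤ 1}) : Fin N)
                ((σ b : {x : Fin N // (T.neighborSet x).ncard ≤ 1}) : Fin N),
              x ∉ w.support) → b ∈ S) →
          cutRank G S ≤ k)}

/-! ### Restrictions of collections, and the sets `C_F`, `L_F`, `R_F`, `D_F` -/

/-- The restriction `P|_{S}` of a collection of subsets of `V` to a subset `S`. -/
def restrictColl {V : Type u} (P : Set (Set V)) (S : Set V) : Set (Set S) :=
  {Y | ∃ X ∈ P, (Subtype.val ⁻¹' X : Set S).Nonempty ∧ Y = (Subtype.val ⁻¹' X : Set S)}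

/-- The restriction `F|_{S}` of a collection of pairs of subsets of `V` to a subset `S`. -/
def restrictF {V : Type u} (F : Set (Set V × Set V)) (S : Set V) : Set (Set S × Set S) :=
  {q | ∃ p ∈ F, (Subtype.val ⁻¹' p.1 : Set S).Nonempty ∧ (Subtype.val ⁻¹' p.2 : Set S).Nonempty ∧
      q = ((Subtype.val ⁻¹' p.1 : Set S), (Subtype.val ⁻¹' p.2 : Set S))}

/-- `C_F(X,X') = {Y ∈ P : (X,Y) ∈ F and (X',Y) ∈ F}`. -/
def CF {V : Type u} (P : Set (Set V)) (F : Set (Set V × Set V)) (X X' : Set V) : Set (Set V) :=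
  {Y ∈ P | (X, Y) ∈ F ∧ (X', Y) ∈ F}

/-- `L_F(X,X') = {Y ∈ P : (X,Y) ∈ F and (X',Y) ∉ F}`. -/
def LF {V : Type u} (P : Set (Set V)) (F : Set (Set V × Set V)) (X X' : Set V) : Set (Set V) :=
  {Y ∈ P | (X, Y) ∈ F ∧ (X', Y) ∉ F}

/-- `R_F(X,X') = {Y ∈ P : (X,Y) ∉ F and (X',Y) ∈ F}`. -/
def RF {V : Type u} (P : Set (Set V)) (F : Set (Set V × Set V)) (X X' : Set V) : Set (Set V) :=
  {Y ∈ P | (X, Y) ∉ F ∧ (X', Y) ∈ F}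

/-- `D_F(X,X') = (C×L) ∪ (C×R) ∪ (L×R) ∪ (L×C) ∪ (R×C) ∪ (R×L)`. -/
def DF {V : Type u} (P : Set (Set V)) (F : Set (Set V × Set V)) (X X' : Set V) :
    Set (Set V × Set V) :=
  (CF P F X X' ×ˢ LF P F X X') ∪ (CF P F X X' ×ˢ RF P F X X') ∪ (LF P F X X' ×ˢ RF P F X X') ∪
  (LF P F X X' ×ˢ CF P F X X') ∪ (RF P F X X' ×ˢ CF P F X X') ∪ (RF P F X X' ×ˢ LF P F X X')

/-- The set of `t` consecutive vertices of the path `P_s` starting at position `i` (0-indexed). -/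
def consec (s i t : ℕ) : Set (Fin s) := {x | i ≤ (x : ℕ) ∧ (x : ℕ) < i + t}

/-- An `(s,t)`-path: a graph isomorphic to the `X`-flip of `P_s` for a set `X` of `t`
consecutive vertices of `P_s`. -/
def IsSTPath (s t : ℕ) {W : Type v} (G : SimpleGraph W) : Prop :=
  ∃ i : ℕ, i + t ≤ s ∧ Nonempty (G ≃g setFlip (pathGraph s) (consec s i t))

/-! ## Statement 5 -/
lemma localComp_adj {V : Type u} (G : SimpleGraph V) (v x y : V) :
    (localComp G v).Adj x y ↔
      x ≠ y ∧ Xor' (G.Adj x y) (G.Adj v x ∧ G.Adj v y) := by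
  show _ ≠ _ ∧ Xor' _ _ ↔ _
  unfold Xor' Xor
  tauto

def symGraph {V : Type u} (P : V → V → Prop) (h : ∀ x, ¬ P x x) : SimpleGraph V where
  Adj x y := P x y ∨ P y x
  symm := ⟨fun _ _ => Or.symm⟩
  loopless := ⟨fun x hx => by rcases hx with h' | h' <;> exact h x h'⟩

lemma symGraph_adj {V : Type u} (P : V → V → Prop) (h : ∀ x, ¬ P x x) (x y : V) :
    (symGraph P h).Adj x y ↔ P x y ∨ P y x := Iff.rfl

/-- adjacency pattern of `gk`. -/
def pgk (t k : ℕ) : (Fin t ⊕ Fin t) → (Fin t ⊕ Fin t) → Prop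
  | .inl i, .inl i' => (i:ℕ)+2 = t ∧ (i':ℕ)+1 = t
  | .inl i, .inr j => ((j:ℕ) ≤ (i:ℕ) ∧ (i:ℕ) < k) ∨ ((i:ℕ) = (j:ℕ) ∧ k ≤ (i:ℕ)) ∨
      ((j:ℕ) = (i:ℕ)+1 ∧ k ≤ (i:ℕ) ∧ (i:ℕ)+3 ≤ t)
  | .inr _, .inl _ => False
  | .inr j, .inr j' => (j:ℕ) < k ∧ (j':ℕ) = k

def pgA (t k : ℕ) : (Fin t ⊕ Fin t) → (Fin t ⊕ Fin t) → Prop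
  | .inl i, .inl i' => (i:ℕ)+2 = t ∧ (i':ℕ)+1 = t
  | .inl i, .inr j => ((j:ℕ) ≤ (i:ℕ) ∧ (i:ℕ) < k+1) ∨ ((i:ℕ) = (j:ℕ) ∧ k+1 ≤ (i:ℕ)) ∨
      ((j:ℕ) = (i:ℕ)+1 ∧ k+1 ≤ (i:ℕ) ∧ (i:ℕ)+3 ≤ t)
  | .inr _, .inl _ => False
  | .inr j, .inr j' => (j:ℕ) < (j':ℕ) ∧ (j':ℕ) ≤ k+1

def pgB (t k : ℕ) : (Fin t ⊕ Fin t) → (Fin t ⊕ Fin t) → Prop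
  | .inl i, .inl i' => (i:ℕ)+2 = t ∧ (i':ℕ)+1 = t
  | .inl i, .inr j => ((j:ℕ) ≤ (i:ℕ) ∧ (i:ℕ) < k) ∨ ((i:ℕ) = (j:ℕ) ∧ k ≤ (i:ℕ)) ∨
      ((j:ℕ) = (i:ℕ)+1 ∧ k ≤ (i:ℕ) ∧ (i:ℕ)+3 ≤ t)
  | .inr _, .inl _ => False
  | .inr j, .inr j' => ((j:ℕ) < k ∧ (j':ℕ) = k) ∨ ((j:ℕ) = k ∧ (j':ℕ) = k+1)

lemma pgk_irrefl (t k : ℕ) : ∀ x, ¬ pgk t k x x := by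
  rintro (i|i) h <;> simp only [pgk] at h <;> omega
lemma pgA_irrefl (t k : ℕ) : ∀ x, ¬ pgA t k x x := by
  rintro (i|i) h <;> simp only [pgA] at h <;> omega
lemma pgB_irrefl (t k : ℕ) : ∀ x, ¬ pgB t k x x := by
  rintro (i|i) h <;> simp only [pgB] at h <;> omega

def gk (t k : ℕ) : SimpleGraph (Fin t ⊕ Fin t) := symGraph (pgk t k) (pgk_irrefl t k)
def gA (t k : ℕ) : SimpleGraph (Fin t ⊕ Fin t) := symGraph (pgA t k) (pgA_irrefl t k)
def gB (t k : ℕ) : SimpleGraph (Fin t ⊕ Fin t) := symGraph (pgB t k) (pgB_irrefl t k)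

set_option maxHeartbeats 1000000 in
lemma step1 (t k : ℕ) (hk : 1 ≤ k) (hkt : k + 3 ≤ t) (h1 : k < t) :
    localComp (gk t (k+1)) (Sum.inl ⟨k, h1⟩) = gA t k := by
  ext x y
  rcases x with i | i <;> rcases y with j | j <;>
    have hx1 := i.isLt <;> have hy1 := j.isLt <;>
    simp only [localComp_adj, gk, gA, symGraph_adj, pgk, pgA, ne_eq, Sum.inl.injEq,
      Sum.inr.injEq, Fin.ext_iff, Xor', xor_def, reduceCtorEq, not_false_eq_true, true_and, and_true, not_true_eq_false, or_true, true_or,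
      false_or, or_false] <;>
    omega

/-- adjacency pattern of the half graph. -/
def phj (t : ℕ) : (Fin t ⊕ Fin t) → (Fin t ⊕ Fin t) → Prop
  | .inl i, .inr j => (j:ℕ) ≤ (i:ℕ)
  | _, _ => False

def phA (t : ℕ) : (Fin t ⊕ Fin t) → (Fin t ⊕ Fin t) → Prop
  | .inl i, .inr j => (j:ℕ) ≤ (i:ℕ)
  | .inr j, .inr j' => (j:ℕ) < (j':ℕ) ∧ (j':ℕ)+2 ≤ t
  | _, _ => False

def phB (t : ℕ) : (Fin t ⊕ Fin t) → (Fin t ⊕ Fin t) → Prop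
  | .inl i, .inl i' => (i:ℕ)+2 = t ∧ (i':ℕ)+1 = t
  | .inl i, .inr j => ((j:ℕ) ≤ (i:ℕ) ∧ (i:ℕ)+2 < t) ∨ ((i:ℕ) = (j:ℕ) ∧ t ≤ (i:ℕ)+2) ∨
      ((i:ℕ)+1 = t ∧ (j:ℕ)+2 = t)
  | .inr j, .inr j' => (j:ℕ)+2 < t ∧ (j':ℕ)+2 = t
  | _, _ => False

lemma phj_irrefl (t : ℕ) : ∀ x, ¬ phj t x x := by
  rintro (i|i) h <;> simp only [phj] at h
lemma phA_irrefl (t : ℕ) : ∀ x, ¬ phA t x x := by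
  rintro (i|i) h <;> simp only [phA] at h <;> omega
lemma phB_irrefl (t : ℕ) : ∀ x, ¬ phB t x x := by
  rintro (i|i) h <;> simp only [phB] at h <;> omega

def hgr (t : ℕ) : SimpleGraph (Fin t ⊕ Fin t) := symGraph (phj t) (phj_irrefl t)
def hA (t : ℕ) : SimpleGraph (Fin t ⊕ Fin t) := symGraph (phA t) (phA_irrefl t)
def hB (t : ℕ) : SimpleGraph (Fin t ⊕ Fin t) := symGraph (phB t) (phB_irrefl t)

lemma halfJoin_adj_ll {n : ℕ} {G H : SimpleGraph (Fin n)} (i j : Fin n) :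
    (halfJoin G H).Adj (.inl i) (.inl j) ↔ G.Adj i j := Iff.rfl
lemma halfJoin_adj_lr {n : ℕ} {G H : SimpleGraph (Fin n)} (i j : Fin n) :
    (halfJoin G H).Adj (.inl i) (.inr j) ↔ j ≤ i := Iff.rfl
lemma halfJoin_adj_rl {n : ℕ} {G H : SimpleGraph (Fin n)} (i j : Fin n) :
    (halfJoin G H).Adj (.inr j) (.inl i) ↔ j ≤ i := Iff.rfl
lemma halfJoin_adj_rr {n : ℕ} {G H : SimpleGraph (Fin n)} (i j : Fin n) :
    (halfJoin G H).Adj (.inr i) (.inr j) ↔ H.Adj i j := Iff.rfl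

lemma hj_eq (t : ℕ) : halfJoin (⊥ : SimpleGraph (Fin t)) ⊥ = hgr t := by
  ext x y
  rcases x with i | i <;> rcases y with j | j <;>
    simp only [halfJoin_adj_ll, halfJoin_adj_lr, halfJoin_adj_rl, halfJoin_adj_rr, bot_adj,
      hgr, symGraph_adj, phj, Fin.le_def, or_false, false_or]

set_option maxHeartbeats 1000000 in
lemma step2 (t k : ℕ) (hk : 1 ≤ k) (hkt : k + 3 ≤ t) (h1 : k < t) :
    localComp (gA t k) (Sum.inr ⟨k, h1⟩) = gB t k := by
  ext x y
  rcases x with i | i <;> rcases y with j | j <;>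
    have hx1 := i.isLt <;> have hy1 := j.isLt <;>
    simp only [localComp_adj, gA, gB, symGraph_adj, pgA, pgB, ne_eq, Sum.inl.injEq,
      Sum.inr.injEq, Fin.ext_iff, Xor', xor_def, reduceCtorEq, not_false_eq_true, true_and, and_true, not_true_eq_false, or_true, true_or,
      false_or, or_false, false_and, and_false] <;>
    omega

set_option maxHeartbeats 1000000 in
lemma step3 (t k : ℕ) (hk : 1 ≤ k) (hkt : k + 3 ≤ t) (h1 : k < t) :
    localComp (gB t k) (Sum.inl ⟨k, h1⟩) = gk t k := by
  ext x y
  rcases x with i | i <;> rcases y with j | j <;>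
    have hx1 := i.isLt <;> have hy1 := j.isLt <;>
    simp only [localComp_adj, gB, gk, symGraph_adj, pgB, pgk, ne_eq, Sum.inl.injEq,
      Sum.inr.injEq, Fin.ext_iff, Xor', xor_def, reduceCtorEq, not_false_eq_true, true_and, and_true, not_true_eq_false, or_true, true_or,
      false_or, or_false, false_and, and_false] <;>
    omega

set_option maxHeartbeats 1000000 in
lemma base1 (t : ℕ) (ht : 3 ≤ t) (h1 : t - 2 < t) :
    localComp (hgr t) (Sum.inl ⟨t - 2, h1⟩) = hA t := by
  ext x y
  rcases x with i | i <;> rcases y with j | j <;>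
    have hx1 := i.isLt <;> have hy1 := j.isLt <;>
    simp only [localComp_adj, hgr, hA, symGraph_adj, phj, phA, ne_eq, Sum.inl.injEq,
      Sum.inr.injEq, Fin.ext_iff, Xor', xor_def, reduceCtorEq, not_false_eq_true, true_and, and_true, not_true_eq_false, or_true, true_or,
      false_or, or_false, false_and, and_false] <;>
    omega

set_option maxHeartbeats 1000000 in
lemma base2 (t : ℕ) (ht : 3 ≤ t) (h1 : t - 2 < t) :
    localComp (hA t) (Sum.inr ⟨t - 2, h1⟩) = hB t := by
  ext x y
  rcases x with i | i <;> rcases y with j | j <;>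
    have hx1 := i.isLt <;> have hy1 := j.isLt <;>
    simp only [localComp_adj, hA, hB, symGraph_adj, phA, phB, ne_eq, Sum.inl.injEq,
      Sum.inr.injEq, Fin.ext_iff, Xor', xor_def, reduceCtorEq, not_false_eq_true, true_and, and_true, not_true_eq_false, or_true, true_or,
      false_or, or_false, false_and, and_false] <;>
    omega

set_option maxHeartbeats 1000000 in
lemma base3 (t : ℕ) (ht : 3 ≤ t) (h1 : t - 2 < t) :
    localComp (hB t) (Sum.inl ⟨t - 2, h1⟩) = gk t (t - 2) := by
  ext x y
  rcases x with i | i <;> rcases y with j | j <;>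
    have hx1 := i.isLt <;> have hy1 := j.isLt <;>
    simp only [localComp_adj, hB, gk, symGraph_adj, phB, pgk, ne_eq, Sum.inl.injEq,
      Sum.inr.injEq, Fin.ext_iff, Xor', xor_def, reduceCtorEq, not_false_eq_true, true_and, and_true, not_true_eq_false, or_true, true_or,
      false_or, or_false, false_and, and_false] <;>
    omega

lemma pivot_step (t k : ℕ) (hk : 1 ≤ k) (hkt : k + 3 ≤ t) (h1 : k < t) :
    pivot (gk t (k+1)) (Sum.inl ⟨k, h1⟩) (Sum.inr ⟨k, h1⟩) = gk t k := by
  unfold pivot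
  rw [step1 t k hk hkt h1, step2 t k hk hkt h1, step3 t k hk hkt h1]

lemma pivot_base (t : ℕ) (ht : 3 ≤ t) (h1 : t - 2 < t) :
    pivot (halfJoin (⊥ : SimpleGraph (Fin t)) ⊥) (Sum.inl ⟨t - 2, h1⟩)
      (Sum.inr ⟨t - 2, h1⟩) = gk t (t - 2) := by
  unfold pivot
  rw [hj_eq t, base1 t ht h1, base2 t ht h1, base3 t ht h1]

/-! ### The path ordering equivalence -/

/-- Position in the path of each vertex. -/
def pgPos (t : ℕ) : (Fin t ⊕ Fin t) → ℕ
  | .inl i => if (i:ℕ) = 0 then 0 else if (i:ℕ) = t - 1 then 2*t - 2 else 2*(i:ℕ) + 1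
  | .inr j => if (j:ℕ) = 0 then 1 else if (j:ℕ) = t - 1 then 2*t - 1 else 2*(j:ℕ)

lemma pgPos_lt (t : ℕ) (ht : 1 ≤ t) (v : Fin t ⊕ Fin t) : pgPos t v < 2*t := by
  rcases v with i | i <;> have hx1 := i.isLt <;> simp only [pgPos] <;> split_ifs <;> omega

/-- Inverse: vertex at a given path position. -/
def pgInv (t n : ℕ) (ht : 1 ≤ t) (hn : n < 2*t) : Fin t ⊕ Fin t :=
  if n = 0 then Sum.inl ⟨0, ht⟩
  else if n = 1 then Sum.inr ⟨0, ht⟩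
  else if h2 : n = 2*t - 1 then Sum.inr ⟨t - 1, by omega⟩
  else if h3 : n = 2*t - 2 then Sum.inl ⟨t - 1, by omega⟩
  else if h4 : n % 2 = 0 then Sum.inr ⟨n / 2, by omega⟩
  else Sum.inl ⟨n / 2, by omega⟩

def pEquiv (t : ℕ) (ht : 1 ≤ t) : (Fin t ⊕ Fin t) ≃ Fin (2*t) where
  toFun v := ⟨pgPos t v, pgPos_lt t ht v⟩
  invFun p := pgInv t p.val ht p.isLt
  left_inv := by
    rintro (i | i) <;> have hx1 := i.isLt <;>
      simp only [pgPos, pgInv] <;> split_ifs <;>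
      first
        | omega
        | (simp only [Sum.inl.injEq, Sum.inr.injEq, Fin.ext_iff, reduceCtorEq]; omega)
        | simp_all
  right_inv := by
    rintro ⟨n, hn⟩
    simp only [pgInv]
    split_ifs <;>
      first
        | omega
        | (simp only [pgPos, Fin.ext_iff]; split_ifs <;> omega)
        | simp_all

lemma iso_small (t : ℕ) (ht : 1 ≤ t) (ht2 : t ≤ 2) :
    Nonempty ((halfJoin (⊥ : SimpleGraph (Fin t)) ⊥) ≃g pathGraph (2*t)) := by
  refine ⟨⟨pEquiv t ht, ?_⟩⟩
  intro a b
  rw [hj_eq t, pathGraph_adj]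
  rcases a with i | i <;> rcases b with j | j <;>
    have hx1 := i.isLt <;> have hy1 := j.isLt <;>
    simp only [hgr, symGraph_adj, phj, pEquiv, Equiv.coe_fn_mk, pgPos, Fin.val_mk,
      false_or, or_false] <;>
    split_ifs <;>
    (try simp only [false_or, or_false, iff_false, false_iff, not_or, not_false_eq_true, true_iff, iff_true, true_or, or_true]) <;>
    omega

lemma iso_big (t : ℕ) (ht : 3 ≤ t) :
    Nonempty ((gk t 1) ≃g pathGraph (2*t)) := by
  refine ⟨⟨pEquiv t (by omega), ?_⟩⟩
  intro a b
  rw [pathGraph_adj]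
  rcases a with i | i <;> rcases b with j | j <;>
    have hx1 := i.isLt <;> have hy1 := j.isLt <;>
    simp only [gk, symGraph_adj, pgk, pEquiv, Equiv.coe_fn_mk, pgPos, Fin.val_mk,
      false_or, or_false] <;>
    split_ifs <;>
    (try simp only [false_or, or_false, iff_false, false_iff, not_or, not_false_eq_true, true_iff, iff_true, true_or, or_true]) <;>
    omega

/-! ### Chaining the pivots -/

lemma chain (t : ℕ) (ht : 3 ≤ t) : ∀ k, 1 ≤ k → k + 2 ≤ t →
    ∃ l, ValidPivots (gk t k) l ∧ pivotSeq (gk t k) l = gk t 1 := by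
  intro k
  induction k with
  | zero => intro h; omega
  | succ k ih =>
    intro _ hk2
    rcases Nat.eq_zero_or_pos k with rfl | hk
    · exact ⟨[], trivial, rfl⟩
    · obtain ⟨l, hv, he⟩ := ih hk (by omega)
      have hlt : k < t := by omega
      refine ⟨(Sum.inl ⟨k, hlt⟩, Sum.inr ⟨k, hlt⟩) :: l, ⟨?_, ?_⟩, ?_⟩
      · exact Or.inl (Or.inl ⟨le_rfl, Nat.lt_succ_self k⟩)
      · show ValidPivots (pivot (gk t (k+1)) _ _) l
        rw [pivot_step t k hk (by omega) hlt]
        exact hv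
      · show pivotSeq (pivot (gk t (k+1)) _ _) l = gk t 1
        rw [pivot_step t k hk (by omega) hlt]
        exact he
theorem stmt5 (t : ℕ) (ht : 1 ≤ t) :
    IsPivotMinorOf (pathGraph (2 * t))
      (halfJoin (⊥ : SimpleGraph (Fin t)) (⊥ : SimpleGraph (Fin t))) := by

  rcases le_or_gt t 2 with h2 | h3
  · obtain ⟨e⟩ := iso_small t ht h2
    exact ⟨[], Set.univ, trivial, ⟨e.symm.trans (induceUnivIso _).symm⟩⟩
  · have ht3 : 3 ≤ t := h3
    have hlt : t - 2 < t := by omega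
    obtain ⟨l, hv, he⟩ := chain t ht3 (t-2) (by omega) (by omega)
    obtain ⟨e⟩ := iso_big t ht3
    refine ⟨(Sum.inl ⟨t-2, hlt⟩, Sum.inr ⟨t-2, hlt⟩) :: l, Set.univ, ⟨?_, ?_⟩, ⟨?_⟩⟩
    · rw [hj_eq t]
      exact Or.inl le_rfl
    · show ValidPivots (pivot _ _ _) l
      rw [pivot_base t ht3 hlt]
      exact hv
    · have heq : pivotSeq (halfJoin (⊥ : SimpleGraph (Fin t)) ⊥)
          ((Sum.inl ⟨t-2, hlt⟩, Sum.inr ⟨t-2, hlt⟩) :: l) = gk t 1 := by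
        show pivotSeq (pivot _ _ _) l = gk t 1
        rw [pivot_base t ht3 hlt]
        exact he
      rw [heq]
      exact e.symm.trans (induceUnivIso _).symm
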